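/- Let b ≥ 2 be an integer. For every integer ℓ ≥ 1, the sum of 3^(‖n‖/3) over all integers n with b^(ℓ−1) ≤ n < b^ℓ (i.e. all n with exactly ℓ digits in base b) satisfies Σ_{b^(ℓ−1) ≤ n < b^ℓ} 3^(‖n‖/3) ≤ (Σ_{r=1}^{b−1} 3^(‖r‖/3)) · (Σ_{d=0}^{b−1} 3^(D(b,d)/3))^(ℓ−1), where the powers of 3 are real powers. -/

import Mathlib

/-- `HasCpx n k` means the positive integer `n` can be written using exactly `k` ones,
additions and multiplications. -/
inductive HasCpx : ℕ → ℕ → Prop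
  | one : HasCpx 1 1
  | add {a b j k : ℕ} : HasCpx a j → HasCpx b k → HasCpx (a + b) (j + k)
  | mul {a b j k : ℕ} : HasCpx a j → HasCpx b k → HasCpx (a * b) (j + k)

/-- The integer complexity `‖n‖`: the least number of 1's needed to write `n` using
only `+` and `*`.  By convention (`sInf ∅ = 0` in `ℕ`) we have `cpx 0 = 0`. -/
noncomputable def cpx (n : ℕ) : ℕ := sInf {k | HasCpx n k}

/-- The digit cost `D b r`: the least `c` such that `‖b·n + r‖ ≤ ‖n‖ + c` for
every positive integer `n`. -/
noncomputable def D (b r : ℕ) : ℕ :=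
  sInf {c : ℕ | ∀ n : ℕ, 1 ≤ n → cpx (b * n + r) ≤ cpx n + c}

lemma hasCpx_self : ∀ n : ℕ, 1 ≤ n → HasCpx n n := by
  intro n hn
  induction n with
  | zero => omega
  | succ m ih =>
    rcases Nat.eq_zero_or_pos m with h | h
    · subst h; exact HasCpx.one
    · exact HasCpx.add (ih h) HasCpx.one

lemma cpx_spec (n : ℕ) (hn : 1 ≤ n) : HasCpx n (cpx n) :=
  Nat.sInf_mem ⟨n, hasCpx_self n hn⟩

lemma cpx_add_le (a c : ℕ) (ha : 1 ≤ a) (hc : 1 ≤ c) : cpx (a + c) ≤ cpx a + cpx c :=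
  Nat.sInf_le (HasCpx.add (cpx_spec a ha) (cpx_spec c hc))

lemma cpx_mul_le (a c : ℕ) (ha : 1 ≤ a) (hc : 1 ≤ c) : cpx (a * c) ≤ cpx a + cpx c :=
  Nat.sInf_le (HasCpx.mul (cpx_spec a ha) (cpx_spec c hc))

lemma D_spec (b d n : ℕ) (hb : 1 ≤ b) (hn : 1 ≤ n) :
    cpx (b * n + d) ≤ cpx n + D b d := by
  have hne : {c : ℕ | ∀ n : ℕ, 1 ≤ n → cpx (b * n + d) ≤ cpx n + c}.Nonempty := by
    refine ⟨cpx b + cpx d, fun m hm => ?_⟩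
    rcases Nat.eq_zero_or_pos d with h | h
    · subst h
      have h1 := cpx_mul_le b m hb hm
      simp only [add_zero]
      omega
    · calc cpx (b * m + d) ≤ cpx (b * m) + cpx d :=
            cpx_add_le _ _ (Nat.one_le_iff_ne_zero.2 (by positivity)) h
      _ ≤ (cpx b + cpx m) + cpx d := by
            have := cpx_mul_le b m hb hm; omega
      _ = cpx m + (cpx b + cpx d) := by ring
  have := Nat.sInf_mem hne
  exact this n hn

/-- For `b ≥ 2` and `ℓ ≥ 1`, the sum of `3^(‖n‖/3)` over the integers `n` with
exactly `ℓ` digits in base `b` is at most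
`(∑_{r=1}^{b-1} 3^(‖r‖/3)) · (∑_{d=0}^{b-1} 3^(D(b,d)/3))^(ℓ-1)`. -/
theorem sum_rpow_digits_le (b ℓ : ℕ) (hb : 2 ≤ b) (hℓ : 1 ≤ ℓ) :
    ∑ n ∈ Finset.Ico (b ^ (ℓ - 1)) (b ^ ℓ), (3 : ℝ) ^ ((cpx n : ℝ) / 3) ≤
      (∑ r ∈ Finset.Icc 1 (b - 1), (3 : ℝ) ^ ((cpx r : ℝ) / 3)) *
        (∑ d ∈ Finset.range b, (3 : ℝ) ^ ((D b d : ℝ) / 3)) ^ (ℓ - 1) := by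
  have hb1 : 1 ≤ b := by omega
  induction ℓ, hℓ using Nat.le_induction with
  | base =>
    have : Finset.Icc 1 (b - 1) = Finset.Ico 1 b := by
      rw [← Finset.Ico_add_one_right_eq_Icc]
      congr 1; omega
    simp [this]
  | succ ℓ hℓ ih =>
    obtain ⟨k, rfl⟩ : ∃ k, ℓ = k + 1 := ⟨ℓ - 1, by omega⟩
    simp only [Nat.add_sub_cancel] at ih ⊢
    have key : ∑ n ∈ Finset.Ico (b ^ (k + 1)) (b ^ (k + 1 + 1)), (3 : ℝ) ^ ((cpx n : ℝ) / 3)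
        = ∑ p ∈ (Finset.Ico (b ^ k) (b ^ (k + 1))) ×ˢ Finset.range b,
            (3 : ℝ) ^ ((cpx (b * p.1 + p.2) : ℝ) / 3) := by
      refine Finset.sum_nbij' (fun n => (n / b, n % b)) (fun p => b * p.1 + p.2) ?_ ?_ ?_ ?_ ?_
      · intro n hn
        simp only [Finset.mem_Ico, Finset.mem_product, Finset.mem_range] at hn ⊢
        refine ⟨⟨?_, ?_⟩, Nat.mod_lt _ (by omega)⟩
        · rw [Nat.le_div_iff_mul_le (by omega)]
          calc b ^ k * b = b ^ (k+1) := by ring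
          _ ≤ n := hn.1
        · rw [Nat.div_lt_iff_lt_mul (by omega)]
          calc n < b ^ (k+1+1) := hn.2
          _ = b ^ (k+1) * b := by ring
      · intro p hp
        simp only [Finset.mem_Ico, Finset.mem_product, Finset.mem_range] at hp ⊢
        obtain ⟨⟨h1, h2⟩, h3⟩ := hp
        constructor
        · calc b ^ (k+1) = b * b ^ k := by ring
          _ ≤ b * p.1 := by exact Nat.mul_le_mul_left b h1
          _ ≤ b * p.1 + p.2 := by omega
        · calc b * p.1 + p.2 < b * p.1 + b := by omega
          _ = b * (p.1 + 1) := by ring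
          _ ≤ b * b ^ (k+1) := Nat.mul_le_mul_left b (by omega)
          _ = b ^ (k+1+1) := by ring
      · intro n hn
        exact Nat.div_add_mod n b
      · intro p hp
        simp only [Finset.mem_product, Finset.mem_range] at hp
        ext <;> simp [Nat.mul_add_div (by omega : 0 < b), Nat.mul_add_mod,
          Nat.div_eq_of_lt hp.2, Nat.mod_eq_of_lt hp.2]
      · intro n hn
        rw [Nat.div_add_mod]
    rw [key]
    have bound : ∀ p ∈ (Finset.Ico (b ^ k) (b ^ (k + 1))) ×ˢ Finset.range b,
        (3 : ℝ) ^ ((cpx (b * p.1 + p.2) : ℝ) / 3)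
          ≤ (3 : ℝ) ^ ((cpx p.1 : ℝ) / 3) * (3 : ℝ) ^ ((D b p.2 : ℝ) / 3) := by
      intro p hp
      simp only [Finset.mem_Ico, Finset.mem_product, Finset.mem_range] at hp
      have hp1 : 1 ≤ p.1 := le_trans (Nat.one_le_pow _ _ (by omega)) hp.1.1
      have hD := D_spec b p.2 p.1 hb1 hp1
      rw [← Real.rpow_add (by norm_num), ← add_div]
      apply Real.rpow_le_rpow_of_exponent_le (by norm_num)
      apply div_le_div_of_nonneg_right ?_ (by norm_num)
      · exact_mod_cast hD
    calc ∑ p ∈ (Finset.Ico (b ^ k) (b ^ (k + 1))) ×ˢ Finset.range b,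
            (3 : ℝ) ^ ((cpx (b * p.1 + p.2) : ℝ) / 3)
        ≤ ∑ p ∈ (Finset.Ico (b ^ k) (b ^ (k + 1))) ×ˢ Finset.range b,
            (3 : ℝ) ^ ((cpx p.1 : ℝ) / 3) * (3 : ℝ) ^ ((D b p.2 : ℝ) / 3) :=
          Finset.sum_le_sum bound
      _ = (∑ n ∈ Finset.Ico (b ^ k) (b ^ (k + 1)), (3 : ℝ) ^ ((cpx n : ℝ) / 3)) *
            (∑ d ∈ Finset.range b, (3 : ℝ) ^ ((D b d : ℝ) / 3)) := by
          rw [Finset.sum_mul_sum]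
          rw [Finset.sum_product]
      _ ≤ ((∑ r ∈ Finset.Icc 1 (b - 1), (3 : ℝ) ^ ((cpx r : ℝ) / 3)) *
            (∑ d ∈ Finset.range b, (3 : ℝ) ^ ((D b d : ℝ) / 3)) ^ k) *
            (∑ d ∈ Finset.range b, (3 : ℝ) ^ ((D b d : ℝ) / 3)) := by
          apply mul_le_mul_of_nonneg_right ih
          exact Finset.sum_nonneg fun d _ => Real.rpow_nonneg (by norm_num) _
      _ = _ := by ring
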